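/- Let group B have linear cost c_B(x) = b·x with b > 0, let β ∈ (0,1), and let σ₂ = σ₁ + (1/b)(1/β − 1). Define the no-subsidy payoff u₁(x) = 1 − max{0, b(σ₁ − x)} and the subsidy-regime payoff u₂(x) = 1 − max{0, β·b(σ₂ − x)} for candidates with x ≥ σ₁ − 1/b (the common set of accepted candidates, since the effective threshold ℓ_B(σ₁) = σ₁ − 1/b equals ℓ_B^β(σ₂)). Then u₂(x) ≤ u₁(x) for every x ≥ σ₁ − 1/b, with strict inequality for every x ∈ (σ₁ − 1/b, σ₂); hence every group-B candidate is weakly worse off under the subsidy, and all candidates who must manipulate are strictly worse off. -/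

import Mathlib

/-- With linear group-B costs, a proportional subsidy β accompanied by the
threshold increase σ₂ = σ₁ + (1/b)(1/β − 1) (keeping the accepted set fixed) makes every
accepted group-B candidate weakly worse off, and strictly worse off whenever she must
manipulate. -/
theorem subsidy_harms_groupB (b β σ₁ σ₂ : ℝ) (hb : 0 < b)
    (hβ : β ∈ Set.Ioo (0 : ℝ) 1)
    (hσ₂ : σ₂ = σ₁ + (1 / b) * (1 / β - 1))
    (u₁ u₂ : ℝ → ℝ)
    (hu₁ : ∀ x, u₁ x = 1 - max 0 (b * (σ₁ - x)))
    (hu₂ : ∀ x, u₂ x = 1 - max 0 (β * b * (σ₂ - x))) :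
    (∀ x, σ₁ - 1 / b ≤ x → u₂ x ≤ u₁ x) ∧
    (∀ x, σ₁ - 1 / b < x → x < σ₂ → u₂ x < u₁ x) := by
  obtain ⟨hβ0, hβ1⟩ := hβ
  have hbne : b ≠ 0 := ne_of_gt hb
  have hβne : β ≠ 0 := ne_of_gt hβ0
  have key : ∀ x : ℝ, β * b * (σ₂ - x) - b * (σ₁ - x) = (1 - β) * (1 - b * (σ₁ - x)) := by
    intro x
    rw [hσ₂]
    field_simp
    ring
  constructor
  · intro x hx
    rw [hu₁, hu₂]
    have h1 : b * (σ₁ - x) ≤ 1 := by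
      have : b * (σ₁ - x) ≤ b * (1 / b) := by
        apply mul_le_mul_of_nonneg_left _ hb.le
        linarith
      rwa [mul_one_div_cancel hbne] at this
    have h2 : b * (σ₁ - x) ≤ β * b * (σ₂ - x) := by
      have := key x
      nlinarith
    have := max_le_max (le_refl (0:ℝ)) h2
    linarith
  · intro x hx1 hx2
    rw [hu₁, hu₂]
    have h1 : b * (σ₁ - x) < 1 := by
      have : b * (σ₁ - x) < b * (1 / b) := by
        apply mul_lt_mul_of_pos_left _ hb
        linarith
      rwa [mul_one_div_cancel hbne] at this
    have h2 : b * (σ₁ - x) < β * b * (σ₂ - x) := by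
      have := key x
      nlinarith
    have hApos : 0 < β * b * (σ₂ - x) := mul_pos (mul_pos hβ0 hb) (by linarith)
    have : max 0 (b * (σ₁ - x)) < max 0 (β * b * (σ₂ - x)) := by
      rw [max_eq_right hApos.le]
      exact max_lt hApos h2
    linarith
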